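/- Fix k_h ∈ ℤ² with k_h ≠ 0. Then the function t ↦ -π t / √(|k_h|² + π² t²) is strictly decreasing on ℝ. Moreover there exists a universal constant c > 0 such that for all l₃, k₃ ∈ ℤ with k₃ ≠ l₃, setting l = (k_h, l₃) and k = (k_h, k₃), one has |λ_l - λ_k| ≥ c |k_h|² / (1 + |k_h|² + k₃²)^{3/2}; equivalently, |λ_l - λ_k|⁻¹ ≤ C (1+|k|)³ / |k_h|² for a universal constant C. -/

import Mathlib

open Real

noncomputable def lamk (k1 k2 k3 : ℤ) : ℝ :=
  -(Real.pi * (k3 : ℝ)) / Real.sqrt ((k1 : ℝ) ^ 2 + (k2 : ℝ) ^ 2 + Real.pi ^ 2 * (k3 : ℝ) ^ 2)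


noncomputable def fA (a t : ℝ) : ℝ := -(Real.pi * t) / Real.sqrt (a + Real.pi ^ 2 * t ^ 2)

lemma fA_hasDeriv (a : ℝ) (ha : 0 < a) (t : ℝ) :
    HasDerivAt (fA a)
      (-(Real.pi * a) / ((a + Real.pi ^ 2 * t ^ 2) * Real.sqrt (a + Real.pi ^ 2 * t ^ 2))) t := by
  have hg : 0 < a + Real.pi ^ 2 * t ^ 2 := by positivity
  have hs : 0 < Real.sqrt (a + Real.pi ^ 2 * t ^ 2) := Real.sqrt_pos.2 hg
  have h1 : HasDerivAt (fun t : ℝ => a + Real.pi ^ 2 * t ^ 2) (Real.pi ^ 2 * (2 * t)) t := by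
    simpa using ((hasDerivAt_pow 2 t).const_mul (Real.pi ^ 2)).const_add a
  have h2 : HasDerivAt (fun t : ℝ => Real.sqrt (a + Real.pi ^ 2 * t ^ 2))
      (Real.pi ^ 2 * t / Real.sqrt (a + Real.pi ^ 2 * t ^ 2)) t := by
    have := (Real.hasDerivAt_sqrt hg.ne').comp t h1
    convert this using 1 <;> try rfl
    field_simp
  have h3 : HasDerivAt (fun t : ℝ => -(Real.pi * t)) (-Real.pi) t := by
    convert ((hasDerivAt_id t).const_mul Real.pi).neg using 1 <;> first | rfl | simp
  have h := h3.div h2 hs.ne'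
  convert h using 1 <;> try rfl
  have hsq : Real.sqrt (a + Real.pi ^ 2 * t ^ 2) * Real.sqrt (a + Real.pi ^ 2 * t ^ 2)
      = a + Real.pi ^ 2 * t ^ 2 := Real.mul_self_sqrt hg.le
  field_simp
  linear_combination (Real.pi ^ 2 * t ^ 2) * hsq


lemma fA_strictAnti (a : ℝ) (ha : 0 < a) : StrictAnti (fA a) := by
  apply strictAnti_of_deriv_neg
  intro x
  rw [(fA_hasDeriv a ha x).deriv]
  have hg : 0 < a + Real.pi ^ 2 * x ^ 2 := by positivity
  have hs : 0 < Real.sqrt (a + Real.pi ^ 2 * x ^ 2) := Real.sqrt_pos.2 hg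
  have hpa : 0 < Real.pi * a := by positivity
  exact div_neg_of_neg_of_pos (neg_neg_of_pos hpa) (mul_pos hg hs)

lemma fA_gap (a : ℝ) (ha : 0 < a) (u v B : ℝ) (huv : u < v)
    (hB : ∀ x ∈ Set.Ioo u v, a + Real.pi ^ 2 * x ^ 2 ≤ B) :
    Real.pi * a * (v - u) / (B * Real.sqrt B) ≤ fA a u - fA a v := by
  have hcont : ContinuousOn (fA a) (Set.Icc u v) := by
    apply Continuous.continuousOn
    apply Continuous.div (by continuity) (by continuity)
    intro x
    have hg : 0 < a + Real.pi ^ 2 * x ^ 2 := by positivity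
    exact (Real.sqrt_pos.2 hg).ne'
  obtain ⟨ξ, hξ, hslope⟩ := exists_hasDerivAt_eq_slope (fA a)
    (fun x => -(Real.pi * a) / ((a + Real.pi ^ 2 * x ^ 2) * Real.sqrt (a + Real.pi ^ 2 * x ^ 2)))
    huv hcont (fun x _ => fA_hasDeriv a ha x)
  have hg : 0 < a + Real.pi ^ 2 * ξ ^ 2 := by positivity
  have hs : 0 < Real.sqrt (a + Real.pi ^ 2 * ξ ^ 2) := Real.sqrt_pos.2 hg
  have hBξ := hB ξ hξ
  have hBpos : 0 < B := lt_of_lt_of_le hg hBξ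
  have hsB : Real.sqrt (a + Real.pi ^ 2 * ξ ^ 2) ≤ Real.sqrt B := Real.sqrt_le_sqrt hBξ
  have hden : (a + Real.pi ^ 2 * ξ ^ 2) * Real.sqrt (a + Real.pi ^ 2 * ξ ^ 2) ≤ B * Real.sqrt B :=
    mul_le_mul hBξ hsB hs.le hBpos.le
  have hdenp : 0 < (a + Real.pi ^ 2 * ξ ^ 2) * Real.sqrt (a + Real.pi ^ 2 * ξ ^ 2) :=
    mul_pos hg hs
  have hdiff : fA a u - fA a v
      = Real.pi * a * (v - u) / ((a + Real.pi ^ 2 * ξ ^ 2) * Real.sqrt (a + Real.pi ^ 2 * ξ ^ 2)) := by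
    have hvu : v - u ≠ 0 := sub_ne_zero.2 huv.ne'
    field_simp at hslope ⊢
    linarith [hslope]
  rw [hdiff]
  have hvu0 : 0 ≤ v - u := by linarith
  exact div_le_div_of_nonneg_left (by positivity) hdenp hden

lemma one_le_sqsum (k1 k2 : ℤ) (h : (k1, k2) ≠ (0, 0)) :
    (1 : ℝ) ≤ (k1 : ℝ) ^ 2 + (k2 : ℝ) ^ 2 := by
  have h' : ¬(k1 = 0 ∧ k2 = 0) := by simpa [Prod.ext_iff] using h
  rcases not_and_or.1 h' with hk | hk
  · have h1 : (1 : ℤ) ≤ k1 ^ 2 := by nlinarith [Int.one_le_abs hk, sq_abs k1, abs_nonneg k1]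
    have h1' : (1 : ℝ) ≤ (k1 : ℝ) ^ 2 := by exact_mod_cast h1
    nlinarith [sq_nonneg (k2 : ℝ)]
  · have h1 : (1 : ℤ) ≤ k2 ^ 2 := by nlinarith [Int.one_le_abs hk, sq_abs k2, abs_nonneg k2]
    have h1' : (1 : ℝ) ≤ (k2 : ℝ) ^ 2 := by exact_mod_cast h1
    nlinarith [sq_nonneg (k1 : ℝ)]

lemma rpow_three_halves (x : ℝ) (hx : 0 < x) :
    x ^ ((3 : ℝ) / 2) = x * Real.sqrt x := by
  rw [show (3 : ℝ) / 2 = 1 + 1 / 2 by norm_num, Real.rpow_add hx, Real.rpow_one,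
    Real.sqrt_eq_rpow]

lemma lamk_sep_key : ∀ k1 k2 l3 k3 : ℤ, (k1, k2) ≠ (0, 0) → k3 ≠ l3 →
    |lamk k1 k2 l3 - lamk k1 k2 k3| ≥
      (Real.pi / (2 * Real.pi ^ 2 * Real.sqrt (2 * Real.pi ^ 2))) * ((k1 : ℝ) ^ 2 + (k2 : ℝ) ^ 2) /
        (1 + ((k1 : ℝ) ^ 2 + (k2 : ℝ) ^ 2) + (k3 : ℝ) ^ 2) ^ ((3 : ℝ) / 2) := by
  intro k1 k2 l3 k3 hk hne
  have ha1 := one_le_sqsum k1 k2 hk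
  set a : ℝ := (k1 : ℝ) ^ 2 + (k2 : ℝ) ^ 2 with ha_def
  have ha : 0 < a := lt_of_lt_of_le one_pos ha1
  set M : ℝ := 1 + a + (k3 : ℝ) ^ 2 with hM_def
  have hM : 0 < M := by positivity
  set B : ℝ := 2 * Real.pi ^ 2 * M with hB_def
  have hπ : (1 : ℝ) ≤ Real.pi ^ 2 := by nlinarith [Real.pi_gt_three]
  have hlam_l : lamk k1 k2 l3 = fA a (l3 : ℝ) := rfl
  have hlam_k : lamk k1 k2 k3 = fA a (k3 : ℝ) := rfl
  have hs2 : (0 : ℝ) < Real.sqrt (2 * Real.pi ^ 2) := Real.sqrt_pos.2 (by positivity)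
  have hsM : (0 : ℝ) < Real.sqrt M := Real.sqrt_pos.2 hM
  have hceq : (Real.pi / (2 * Real.pi ^ 2 * Real.sqrt (2 * Real.pi ^ 2))) * a / M ^ ((3 : ℝ) / 2)
      = Real.pi * a * 1 / (B * Real.sqrt B) := by
    rw [rpow_three_halves M hM, hB_def, Real.sqrt_mul (by positivity) M]
    field_simp
  rw [ge_iff_le, hceq, hlam_l, hlam_k]
  rcases hne.lt_or_gt with hl | hl
  · -- k3 < l3
    have hBx : ∀ x ∈ Set.Ioo ((k3 : ℝ)) ((k3 : ℝ) + 1), a + Real.pi ^ 2 * x ^ 2 ≤ B := by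
      intro x hx
      have hx2 : x ^ 2 ≤ 2 * (k3 : ℝ) ^ 2 + 2 := by
        nlinarith [hx.1, hx.2, mul_pos (sub_pos.2 hx.1) (sub_pos.2 hx.2),
          sq_nonneg ((k3 : ℝ) - 1), sq_nonneg ((k3 : ℝ) + 1)]
      have h3 : Real.pi ^ 2 * x ^ 2 ≤ Real.pi ^ 2 * (2 * (k3 : ℝ) ^ 2 + 2) :=
        mul_le_mul_of_nonneg_left hx2 (by positivity)
      rw [hB_def, hM_def]; nlinarith [h3, hπ, ha]
    have hgap := fA_gap a ha (k3 : ℝ) ((k3 : ℝ) + 1) B (by linarith) hBx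
    have hmono : fA a (l3 : ℝ) ≤ fA a ((k3 : ℝ) + 1) := by
      apply (fA_strictAnti a ha).antitone
      have : k3 + 1 ≤ l3 := hl
      exact_mod_cast this
    have h1 : Real.pi * a * (((k3 : ℝ) + 1) - (k3 : ℝ)) = Real.pi * a * 1 := by ring
    rw [h1] at hgap
    have : Real.pi * a * 1 / (B * Real.sqrt B) ≤ fA a (k3 : ℝ) - fA a (l3 : ℝ) := by
      linarith
    calc Real.pi * a * 1 / (B * Real.sqrt B) ≤ fA a (k3 : ℝ) - fA a (l3 : ℝ) := this
      _ = -(fA a (l3 : ℝ) - fA a (k3 : ℝ)) := by ring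
      _ ≤ |fA a (l3 : ℝ) - fA a (k3 : ℝ)| := neg_le_abs _
  · -- l3 < k3
    have hBx : ∀ x ∈ Set.Ioo ((k3 : ℝ) - 1) ((k3 : ℝ)), a + Real.pi ^ 2 * x ^ 2 ≤ B := by
      intro x hx
      have hx2 : x ^ 2 ≤ 2 * (k3 : ℝ) ^ 2 + 2 := by
        nlinarith [hx.1, hx.2, mul_pos (sub_pos.2 hx.1) (sub_pos.2 hx.2),
          sq_nonneg ((k3 : ℝ) - 1), sq_nonneg ((k3 : ℝ) + 1)]
      have h3 : Real.pi ^ 2 * x ^ 2 ≤ Real.pi ^ 2 * (2 * (k3 : ℝ) ^ 2 + 2) :=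
        mul_le_mul_of_nonneg_left hx2 (by positivity)
      rw [hB_def, hM_def]; nlinarith [h3, hπ, ha]
    have hgap := fA_gap a ha ((k3 : ℝ) - 1) (k3 : ℝ) B (by linarith) hBx
    have hmono : fA a ((k3 : ℝ) - 1) ≤ fA a (l3 : ℝ) := by
      apply (fA_strictAnti a ha).antitone
      have : l3 ≤ k3 - 1 := by omega
      have h' : (l3 : ℝ) ≤ (k3 : ℝ) - 1 := by exact_mod_cast this
      exact h'
    have h1 : Real.pi * a * ((k3 : ℝ) - ((k3 : ℝ) - 1)) = Real.pi * a * 1 := by ring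
    rw [h1] at hgap
    calc Real.pi * a * 1 / (B * Real.sqrt B) ≤ fA a (l3 : ℝ) - fA a (k3 : ℝ) := by linarith
      _ ≤ |fA a (l3 : ℝ) - fA a (k3 : ℝ)| := le_abs_self _

/-- For a fixed nonzero horizontal mode `k_h`, the dispersion function
`t ↦ -πt/√(|k_h|² + π²t²)` is strictly decreasing; consequently the eigenvalues
`λ_{(k_h,l₃)}` are pairwise distinct with a quantitative (universal) separation:
`|λ_l - λ_k| ≥ c |k_h|² / (1 + |k_h|² + k₃²)^{3/2}`, equivalently
`|λ_l - λ_k|⁻¹ ≤ C (1+|k|)³ / |k_h|²`. -/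
theorem lamk_separation :
    (∀ k1 k2 : ℤ, (k1, k2) ≠ (0, 0) →
      StrictAnti (fun t : ℝ =>
        -(Real.pi * t) / Real.sqrt ((k1 : ℝ) ^ 2 + (k2 : ℝ) ^ 2 + Real.pi ^ 2 * t ^ 2))) ∧
    (∃ c : ℝ, 0 < c ∧ ∀ k1 k2 l3 k3 : ℤ, (k1, k2) ≠ (0, 0) → k3 ≠ l3 →
      |lamk k1 k2 l3 - lamk k1 k2 k3| ≥
        c * ((k1 : ℝ) ^ 2 + (k2 : ℝ) ^ 2) /
          (1 + ((k1 : ℝ) ^ 2 + (k2 : ℝ) ^ 2) + (k3 : ℝ) ^ 2) ^ ((3 : ℝ) / 2)) ∧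
    (∃ C : ℝ, 0 < C ∧ ∀ k1 k2 l3 k3 : ℤ, (k1, k2) ≠ (0, 0) → k3 ≠ l3 →
      |lamk k1 k2 l3 - lamk k1 k2 k3|⁻¹ ≤
        C * (1 + Real.sqrt ((k1 : ℝ) ^ 2 + (k2 : ℝ) ^ 2 + (k3 : ℝ) ^ 2)) ^ 3 /
          ((k1 : ℝ) ^ 2 + (k2 : ℝ) ^ 2)) := by
  set c : ℝ := Real.pi / (2 * Real.pi ^ 2 * Real.sqrt (2 * Real.pi ^ 2)) with hc_def
  have hc : 0 < c := by
    rw [hc_def]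
    have := Real.pi_pos
    positivity
  refine ⟨?_, ⟨c, hc, lamk_sep_key⟩, ⟨c⁻¹, by positivity, ?_⟩⟩
  · intro k1 k2 h
    exact fA_strictAnti _ (lt_of_lt_of_le one_pos (one_le_sqsum k1 k2 h))
  · intro k1 k2 l3 k3 hk hne
    have ha1 := one_le_sqsum k1 k2 hk
    set a : ℝ := (k1 : ℝ) ^ 2 + (k2 : ℝ) ^ 2 with ha_def
    have ha : 0 < a := lt_of_lt_of_le one_pos ha1
    set M : ℝ := 1 + a + (k3 : ℝ) ^ 2 with hM_def
    have hM : 0 < M := by positivity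
    set s : ℝ := Real.sqrt (a + (k3 : ℝ) ^ 2) with hs_def
    have hs0 : 0 ≤ s := Real.sqrt_nonneg _
    have hssq : s ^ 2 = a + (k3 : ℝ) ^ 2 := Real.sq_sqrt (by positivity)
    have hsep := lamk_sep_key k1 k2 l3 k3 hk hne
    have hM32 : M ^ ((3 : ℝ) / 2) ≤ (1 + s) ^ 3 := by
      have hM_le : M ≤ (1 + s) ^ 2 := by nlinarith
      calc M ^ ((3 : ℝ) / 2) ≤ ((1 + s) ^ 2) ^ ((3 : ℝ) / 2) :=
            Real.rpow_le_rpow hM.le hM_le (by norm_num)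
        _ = (1 + s) ^ 3 := by
            rw [← Real.rpow_natCast (1 + s) 2, ← Real.rpow_mul (by positivity),
              ← Real.rpow_natCast (1 + s) 3]
            norm_num
    have hpos : 0 < c * a / M ^ ((3 : ℝ) / 2) := by positivity
    have h1 : |lamk k1 k2 l3 - lamk k1 k2 k3|⁻¹ ≤ (c * a / M ^ ((3 : ℝ) / 2))⁻¹ :=
      inv_anti₀ hpos hsep
    have h2 : (c * a / M ^ ((3 : ℝ) / 2))⁻¹ = M ^ ((3 : ℝ) / 2) / (c * a) := inv_div _ _
    have h3 : M ^ ((3 : ℝ) / 2) / (c * a) ≤ (1 + s) ^ 3 / (c * a) := by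
      gcongr
    have h4 : (1 + s) ^ 3 / (c * a) = c⁻¹ * (1 + s) ^ 3 / a := by
      field_simp
    calc |lamk k1 k2 l3 - lamk k1 k2 k3|⁻¹ ≤ (c * a / M ^ ((3 : ℝ) / 2))⁻¹ := h1
      _ = M ^ ((3 : ℝ) / 2) / (c * a) := h2
      _ ≤ (1 + s) ^ 3 / (c * a) := h3
      _ = c⁻¹ * (1 + s) ^ 3 / a := h4
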